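/- Let ι be a finite type, T ≥ 3 an integer, Γ_1, …, Γ_T ⊆ ι pairwise disjoint finsets, and Γ̃ ⊆ ι a finset such that Γ_j ∩ Γ̃ has exactly one element for each j. Let ψ ∈ H be a unit vector. Then p_qu(ψ) − 1/2 = (1/2)·∑_σ ( |⟨ψ, φ⁺_σ⟩|² − |⟨ψ, φ⁻_σ⟩|² ), where the sum ranges over all σ : ι → ZMod 2 satisfying ∑_{b∈Γ_j} σ b = 0 in ZMod 2 for every j = 1,…,T, and φ^±_σ = (1/√2)(δ_σ ± V_{Γ̃} δ_σ), δ_σ being the computational basis vector supported at σ. -/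

import Mathlib

open Finset

noncomputable section

/-- The Hilbert space of qubits at the elements of `ι`. -/
abbrev QubitSpace (ι : Type*) := (ι → ZMod 2) → ℂ

/-- Indicator function of a finset, valued in `ZMod 2`. -/
def indicZ2 {ι : Type*} [DecidableEq ι] (S : Finset ι) : ι → ZMod 2 :=
  fun b => if b ∈ S then 1 else 0

/-- The Z-type operator `W_S`. -/
def Wop {ι : Type*} [DecidableEq ι] (S : Finset ι) :
    Module.End ℂ (QubitSpace ι) where
  toFun ψ := fun σ => (-1 : ℂ) ^ (∑ b ∈ S, σ b).val * ψ σ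
  map_add' ψ φ := by funext σ; simp [mul_add]
  map_smul' c ψ := by funext σ; simp; ring

/-- The X-type operator `V_S`. -/
def Vop {ι : Type*} [DecidableEq ι] (S : Finset ι) :
    Module.End ℂ (QubitSpace ι) where
  toFun ψ := fun σ => ψ (σ + indicZ2 S)
  map_add' _ _ := rfl
  map_smul' _ _ := rfl

/-- The inner product `⟨ψ, φ⟩ = ∑_σ conj (ψ σ) · φ σ`. -/
def qInner {ι : Type*} [Fintype ι] [DecidableEq ι] (ψ φ : QubitSpace ι) : ℂ :=
  ∑ σ, (starRingEnd ℂ) (ψ σ) * φ σ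

/-- Square root of an involution: `W^{1/2} = (1/2)(1+W) + (i/2)(1−W)`. -/
def sqrtInv {E : Type*} [AddCommGroup E] [Module ℂ E] (W : Module.End ℂ E) :
    Module.End ℂ E :=
  ((2 : ℂ)⁻¹) • (1 + W) + (Complex.I * (2 : ℂ)⁻¹) • (1 - W)

/-- `W^{a/2}` for `a ∈ {0,1}`: the identity if `a = 0`, `W^{1/2}` if `a = 1`. -/
def halfPow {E : Type*} [AddCommGroup E] [Module ℂ E] (W : Module.End ℂ E)
    (a : ℕ) : Module.End ℂ E :=
  if a = 0 then 1 else sqrtInv W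

/-- The post-strategy state `ψ' = (∏_j W_{Γ_j}^{a_j/2}) ψ` (the factors are
commuting diagonal operators, so the order of the product is immaterial). -/
def postState {ι : Type*} [DecidableEq ι] {T : ℕ} (Γ : Fin T → Finset ι)
    (a : Fin T → ℕ) (ψ : QubitSpace ι) : QubitSpace ι :=
  ((List.ofFn fun j => halfPow (Wop (Γ j)) (a j)).prod) ψ

/-- The X-basis vector `χ_y(σ) = 2^{−|ι|/2} (−1)^{∑_b σ(b)·y(b)}`. -/
def chi {ι : Type*} [Fintype ι] (y : ι → ZMod 2) : QubitSpace ι :=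
  fun σ => (((Real.sqrt 2 ^ Fintype.card ι)⁻¹ : ℝ) : ℂ) *
    (-1 : ℂ) ^ (∑ b, (σ b).val * (y b).val)

/-- `r = ((∑_j a_j)/2) mod 2 ∈ ZMod 2`. -/
def rOf {T : ℕ} (a : Fin T → ℕ) : ZMod 2 := (((∑ j, a j) / 2 : ℕ) : ZMod 2)

/-- The winning probability on input `a`:
`p(ψ, a) = ∑_{y : ∑_{b ∈ Γ̃} y b = r} |⟨χ_y, ψ'⟩|²`. -/
def winProb {ι : Type*} [Fintype ι] [DecidableEq ι] {T : ℕ}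
    (Γ : Fin T → Finset ι) (Γt : Finset ι) (a : Fin T → ℕ)
    (ψ : QubitSpace ι) : ℝ :=
  ∑ y ∈ univ.filter (fun y : ι → ZMod 2 => ∑ b ∈ Γt, y b = rOf a),
    ‖qInner (chi y) (postState Γ a ψ)‖ ^ 2

/-- The quantum winning probability: the average of `p(ψ, a)` over the
`2^{T−1}` valid inputs `a` (those with `∑_j a_j` even). -/
def quantumWinProb {ι : Type*} [Fintype ι] [DecidableEq ι] {T : ℕ}
    (Γ : Fin T → Finset ι) (Γt : Finset ι) (ψ : QubitSpace ι) : ℝ :=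
  (∑ a ∈ univ.filter (fun a : Fin T → Fin 2 => Even (∑ j, (a j : ℕ))),
      winProb Γ Γt (fun j => (a j : ℕ)) ψ) / 2 ^ (T - 1)

/-- The computational basis vector `δ_σ`. -/
def deltaVec {ι : Type*} [DecidableEq (ι → ZMod 2)] (σ : ι → ZMod 2) :
    QubitSpace ι :=
  fun τ => if τ = σ then 1 else 0

namespace CatGame

/-- sign character of `ZMod 2` -/
def sgn (x : ZMod 2) : ℂ := (-1 : ℂ) ^ x.val

lemma sgn_zero : sgn 0 = 1 := rfl
lemma sgn_one : sgn 1 = -1 := by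
  show (-1 : ℂ) ^ (1 : ZMod 2).val = -1
  rw [show (1 : ZMod 2).val = 1 from rfl, pow_one]

lemma zmod2_cases (x : ZMod 2) : x = 0 ∨ x = 1 := by
  fin_cases x
  · exact Or.inl rfl
  · exact Or.inr rfl

lemma sgn_add (x y : ZMod 2) : sgn (x + y) = sgn x * sgn y := by
  rcases zmod2_cases x with h | h <;> rcases zmod2_cases y with h' | h' <;>
    subst h <;> subst h' <;>
    simp only [show ((1:ZMod 2) + 1 : ZMod 2) = 0 from rfl, add_zero, zero_add,
      sgn_zero, sgn_one, mul_one, one_mul, neg_neg, neg_mul]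

lemma sgn_sum {α : Type*} (s : Finset α) (f : α → ZMod 2) :
    sgn (∑ i ∈ s, f i) = ∏ i ∈ s, sgn (f i) := by
  classical
  induction s using Finset.cons_induction with
  | empty => simp [sgn_zero]
  | cons a s ha ih =>
      rw [Finset.sum_cons, Finset.prod_cons, sgn_add, ih]

lemma neg_one_pow_nat (n : ℕ) : (-1 : ℂ) ^ n = sgn ((n : ZMod 2)) := by
  unfold sgn
  rw [ZMod.val_natCast]
  conv_lhs => rw [← Nat.div_add_mod n 2]
  rw [pow_add, pow_mul]
  norm_num

lemma val_natCast_zmod2 (x : ZMod 2) : ((x.val : ZMod 2)) = x := by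
  rcases zmod2_cases x with h | h <;> subst h <;> rfl

lemma val_mul_zmod2 (x y : ZMod 2) : (x * y).val = x.val * y.val := by
  rcases zmod2_cases x with h | h <;> rcases zmod2_cases y with h' | h' <;>
    subst h <;> subst h' <;> rfl

lemma sgn_mul_self (x : ZMod 2) : sgn x * sgn x = 1 := by
  rcases zmod2_cases x with h | h <;> subst h <;> simp [sgn_zero, sgn_one]

lemma sgn_ne_zero (x : ZMod 2) : sgn x ≠ 0 := by
  rcases zmod2_cases x with h | h <;> subst h <;> simp [sgn_zero, sgn_one]

end CatGame
namespace CatGame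
set_option linter.unusedSectionVars false

variable {ι : Type*} [DecidableEq ι]

/-- A diagonal operator. -/
def diagOp (f : (ι → ZMod 2) → ℂ) : Module.End ℂ (QubitSpace ι) where
  toFun ψ := fun σ => f σ * ψ σ
  map_add' ψ φ := by funext σ; simp [mul_add]
  map_smul' c ψ := by funext σ; simp; ring

lemma diagOp_apply (f : (ι → ZMod 2) → ℂ) (ψ : QubitSpace ι) (σ : ι → ZMod 2) :
    diagOp f ψ σ = f σ * ψ σ := rfl

lemma halfPow_eq_diag (S : Finset ι) (a : Fin 2) :
    halfPow (Wop S) (a : ℕ) =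
      diagOp (fun σ => Complex.I ^ ((a : ℕ) * (∑ b ∈ S, σ b).val)) := by
  fin_cases a
  · ext ψ σ
    simp [halfPow, diagOp_apply]
  · ext ψ σ
    show sqrtInv (Wop S) ψ σ = _
    rw [diagOp_apply]
    show (2:ℂ)⁻¹ • (ψ σ + Wop S ψ σ) + (Complex.I * 2⁻¹) • (ψ σ - Wop S ψ σ) = _
    show (2:ℂ)⁻¹ • (ψ σ + (-1 :ℂ)^(∑ b ∈ S, σ b).val * ψ σ)
      + (Complex.I * 2⁻¹) • (ψ σ - (-1:ℂ)^(∑ b ∈ S, σ b).val * ψ σ) = _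
    rcases zmod2_cases (∑ b ∈ S, σ b) with h | h <;> rw [h]
    · rw [show (0 : ZMod 2).val = 0 from rfl]
      simp only [pow_zero, one_mul, mul_zero]
      simp [smul_eq_mul]
      ring
    · rw [show (1 : ZMod 2).val = 1 from rfl]
      simp only [pow_one, mul_one, neg_one_mul]
      simp [smul_eq_mul]
      ring

lemma listProd_diag : ∀ (n : ℕ) (f : Fin n → (ι → ZMod 2) → ℂ)
    (ψ : QubitSpace ι) (σ : ι → ZMod 2),
    ((List.ofFn fun j => diagOp (f j)).prod) ψ σ = (∏ j, f j σ) * ψ σ := by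
  intro n
  induction n with
  | zero => intro f ψ σ; simp [Module.End.one_apply]
  | succ n ih =>
      intro f ψ σ
      rw [List.ofFn_succ, List.prod_cons, Module.End.mul_apply, diagOp_apply,
        ih (fun j => f j.succ), Fin.prod_univ_succ]
      ring

variable [Fintype ι]

lemma postState_apply {T : ℕ} (Γ : Fin T → Finset ι) (a : Fin T → Fin 2)
    (ψ : QubitSpace ι) (σ : ι → ZMod 2) :
    postState Γ (fun j => (a j : ℕ)) ψ σ =
      Complex.I ^ (∑ j, (a j : ℕ) * (∑ b ∈ Γ j, σ b).val) * ψ σ := by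
  unfold postState
  have h : (List.ofFn fun j => halfPow (Wop (Γ j)) ((a j : ℕ))) =
      List.ofFn fun j =>
        diagOp (fun σ => Complex.I ^ ((a j : ℕ) * (∑ b ∈ Γ j, σ b).val)) := by
    congr 1
    funext j
    exact halfPow_eq_diag (Γ j) (a j)
  rw [h, listProd_diag, Finset.prod_pow_eq_pow_sum]

end CatGame
namespace CatGame
set_option linter.unusedSectionVars false

variable {ι : Type*} [Fintype ι] [DecidableEq ι]

lemma fun_add_self (z : ι → ZMod 2) : z + z = 0 :=
  funext fun b => CharTwo.add_self_eq_zero (z b)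

/-- single-site flip -/
def singleF (b₀ : ι) : ι → ZMod 2 := fun b => if b = b₀ then 1 else 0

lemma sum_singleF (S : Finset ι) (b₀ : ι) :
    ∑ b ∈ S, singleF b₀ b = if b₀ ∈ S then 1 else 0 := by
  simp only [singleF]
  exact Finset.sum_ite_eq' S b₀ (fun _ => (1 : ZMod 2))

lemma B_singleF (u : ι → ZMod 2) (b₀ : ι) :
    ∑ b, u b * singleF b₀ b = u b₀ := by
  have h : ∀ b, u b * singleF b₀ b = if b = b₀ then u b else 0 := by
    intro b; simp only [singleF]; split <;> simp
  rw [Finset.sum_congr rfl (fun b _ => h b), Finset.sum_ite_eq' univ b₀ u,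
    if_pos (Finset.mem_univ b₀)]

lemma two_pow_pred (n : ℕ) (hn : 1 ≤ n) : (2 : ℕ) ^ n = 2 * 2 ^ (n - 1) := by
  rcases Nat.exists_eq_add_of_le hn with ⟨k, rfl⟩
  simp [pow_add, pow_succ]

lemma card_fiber (Γt : Finset ι) (hne : Γt.Nonempty) (r : ZMod 2) :
    (univ.filter fun y : ι → ZMod 2 => ∑ b ∈ Γt, y b = r).card
      = 2 ^ (Fintype.card ι - 1) := by
  obtain ⟨b₀, hb₀⟩ := hne
  have hbij :
      (univ.filter fun y : ι → ZMod 2 => ∑ b ∈ Γt, y b = r).card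
        = (univ.filter fun y : ι → ZMod 2 => ∑ b ∈ Γt, y b = r + 1).card := by
    refine Finset.card_bij' (fun y _ => y + singleF b₀) (fun y _ => y + singleF b₀)
      ?_ ?_ ?_ ?_
    · intro y hy
      simp only [Finset.mem_filter, Finset.mem_univ, true_and] at hy ⊢
      simp only [Pi.add_apply, Finset.sum_add_distrib, hy, sum_singleF, hb₀, if_pos]
    · intro y hy
      simp only [Finset.mem_filter, Finset.mem_univ, true_and] at hy ⊢
      simp only [Pi.add_apply, Finset.sum_add_distrib, hy, sum_singleF, hb₀, if_pos]
      rw [add_assoc, CharTwo.add_self_eq_zero, add_zero]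
    · intro y _
      show y + singleF b₀ + singleF b₀ = y
      rw [add_assoc, fun_add_self, add_zero]
    · intro y _
      show y + singleF b₀ + singleF b₀ = y
      rw [add_assoc, fun_add_self, add_zero]
  have hsplit :
      (univ.filter fun y : ι → ZMod 2 => ∑ b ∈ Γt, y b = r).card
        + (univ.filter fun y : ι → ZMod 2 => ∑ b ∈ Γt, y b = r + 1).card
      = 2 ^ Fintype.card ι := by
    have h1 : (univ.filter fun y : ι → ZMod 2 => ¬ (∑ b ∈ Γt, y b = r))
        = (univ.filter fun y : ι → ZMod 2 => ∑ b ∈ Γt, y b = r + 1) := by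
      apply Finset.filter_congr
      intro y _
      rcases zmod2_cases (∑ b ∈ Γt, y b) with h | h <;>
        rcases zmod2_cases r with h' | h' <;> rw [h, h'] <;> simp <;> decide
    have h2 := Finset.card_filter_add_card_filter_not
      (s := (univ : Finset (ι → ZMod 2))) (fun y => ∑ b ∈ Γt, y b = r)
    rw [h1, Finset.card_univ, Fintype.card_fun, ZMod.card] at h2
    exact h2
  have hn : 1 ≤ Fintype.card ι := Fintype.card_pos_iff.mpr ⟨b₀⟩
  rw [two_pow_pred _ hn, ← hbij] at hsplit
  have h2 : 2 * (univ.filter fun y : ι → ZMod 2 => ∑ b ∈ Γt, y b = r).card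
      = 2 * 2 ^ (Fintype.card ι - 1) := by rw [two_mul]; exact hsplit
  exact Nat.eq_of_mul_eq_mul_left two_pos h2

end CatGame
namespace CatGame
set_option linter.unusedSectionVars false

variable {ι : Type*} [Fintype ι] [DecidableEq ι]

lemma charSum (Γt : Finset ι) (hne : Γt.Nonempty) (r : ZMod 2) (u : ι → ZMod 2) :
    ∑ y ∈ univ.filter (fun y : ι → ZMod 2 => ∑ b ∈ Γt, y b = r),
        sgn (∑ b, u b * y b)
      = if u = 0 then ((2 : ℂ) ^ (Fintype.card ι - 1))
        else if u = indicZ2 Γt then sgn r * 2 ^ (Fintype.card ι - 1) else 0 := by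
  by_cases h0 : u = 0
  · subst h0
    rw [if_pos rfl]
    have h : ∀ y ∈ univ.filter (fun y : ι → ZMod 2 => ∑ b ∈ Γt, y b = r),
        sgn (∑ b, (0 : ι → ZMod 2) b * y b) = 1 := by
      intro y _
      simp [sgn_zero]
    rw [Finset.sum_congr rfl h, Finset.sum_const, card_fiber Γt hne r]
    simp
  rw [if_neg h0]
  by_cases he : u = indicZ2 Γt
  · subst he
    rw [if_pos rfl]
    have h : ∀ y ∈ univ.filter (fun y : ι → ZMod 2 => ∑ b ∈ Γt, y b = r),
        sgn (∑ b, indicZ2 Γt b * y b) = sgn r := by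
      intro y hy
      rw [Finset.mem_filter] at hy
      congr 1
      rw [← hy.2]
      have : ∀ b, indicZ2 Γt b * y b = if b ∈ Γt then y b else 0 := by
        intro b; simp only [indicZ2]; split <;> simp
      rw [Finset.sum_congr rfl (fun b _ => this b), Finset.sum_ite_mem,
        Finset.univ_inter]
    rw [Finset.sum_congr rfl h, Finset.sum_const, card_fiber Γt hne r]
    simp [mul_comm]
  rw [if_neg he]
  -- find z with ∑_{Γt} z = 0 and ∑ u b * z b = 1
  obtain ⟨z, hz1, hz2⟩ : ∃ z : ι → ZMod 2,
      (∑ b ∈ Γt, z b = 0) ∧ (∑ b, u b * z b = 1) := by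
    by_cases hsupp : ∀ b, b ∉ Γt → u b = 0
    · obtain ⟨b₁, hb₁⟩ := Function.ne_iff.mp h0
      have hub₁ : u b₁ = 1 := by
        rcases zmod2_cases (u b₁) with h | h
        · exact absurd h hb₁
        · exact h
      have hb₁Γ : b₁ ∈ Γt := by
        by_contra hc
        exact hb₁ (hsupp b₁ hc)
      obtain ⟨b₂, hb₂⟩ := Function.ne_iff.mp he
      have hb₂Γ : b₂ ∈ Γt := by
        by_contra hc
        exact hb₂ (by rw [hsupp b₂ hc, indicZ2, if_neg hc])
      have hub₂ : u b₂ = 0 := by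
        rcases zmod2_cases (u b₂) with h | h
        · exact h
        · exact absurd (by rw [h, indicZ2, if_pos hb₂Γ]) hb₂
      refine ⟨singleF b₁ + singleF b₂, ?_, ?_⟩
      · simp only [Pi.add_apply, Finset.sum_add_distrib, sum_singleF,
          if_pos hb₁Γ, if_pos hb₂Γ]
        rfl
      · simp only [Pi.add_apply, mul_add, Finset.sum_add_distrib,
          B_singleF, hub₁, hub₂, add_zero]
    · push_neg at hsupp
      obtain ⟨b, hbΓ, hub⟩ := hsupp
      have hub1 : u b = 1 := by
        rcases zmod2_cases (u b) with h | h
        · exact absurd h hub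
        · exact h
      exact ⟨singleF b, by rw [sum_singleF, if_neg hbΓ], by rw [B_singleF, hub1]⟩
  refine Finset.sum_involution (fun y _ => y + z) ?_ ?_ ?_ ?_
  · intro y _
    have : (∑ b, u b * (y + z) b) = (∑ b, u b * y b) + 1 := by
      rw [← hz2, ← Finset.sum_add_distrib]
      apply Finset.sum_congr rfl
      intro b _
      simp [Pi.add_apply, mul_add]
    rw [this, sgn_add, sgn_one]
    ring
  · intro y _ _
    intro hcon
    have hz0 : z = 0 := by
      have := congrArg (fun w => w - y) hcon
      simpa [add_comm, add_sub_cancel_left] using this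
    rw [hz0] at hz2
    simp at hz2
  · intro y hy
    rw [Finset.mem_filter] at hy ⊢
    refine ⟨Finset.mem_univ _, ?_⟩
    simp only [Pi.add_apply, Finset.sum_add_distrib, hy.2, hz1, add_zero]
  · intro y _
    show y + z + z = y
    rw [add_assoc, fun_add_self, add_zero]

end CatGame
namespace CatGame
set_option linter.unusedSectionVars false

/-- cast `Fin 2 → ZMod 2` -/
def c2 (x : Fin 2) : ZMod 2 := ((x : ℕ) : ZMod 2)

lemma c2_add (x y : Fin 2) : c2 (x + y) = c2 x + c2 y := by
  fin_cases x <;> fin_cases y <;> rfl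

lemma fin2_add_add (x y : Fin 2) : x + y + y = x := by
  fin_cases x <;> fin_cases y <;> rfl

lemma c2_zero : c2 0 = 0 := rfl
lemma c2_one : c2 1 = 1 := rfl

variable {T : ℕ}

/-- single flip in `Fin T → Fin 2` -/
def singleT (j₀ : Fin T) : Fin T → Fin 2 := fun j => if j = j₀ then 1 else 0

lemma sum_c2_singleT (j₀ : Fin T) : ∑ j, c2 (singleT j₀ j) = 1 := by
  have h : ∀ j, c2 (singleT j₀ j) = if j = j₀ then 1 else 0 := by
    intro j; simp only [singleT]; split <;> rfl
  rw [Finset.sum_congr rfl (fun j _ => h j), Finset.sum_ite_eq' univ j₀ (fun _ => (1 : ZMod 2)),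
    if_pos (Finset.mem_univ j₀)]

lemma sum_c2_singleT_mul (j₀ : Fin T) (s : Fin T → ZMod 2) :
    ∑ j, c2 (singleT j₀ j) * s j = s j₀ := by
  have h : ∀ j, c2 (singleT j₀ j) * s j = if j = j₀ then s j else 0 := by
    intro j; simp only [singleT]; split <;> simp [c2_one, c2_zero]
  rw [Finset.sum_congr rfl (fun j _ => h j), Finset.sum_ite_eq' univ j₀ s,
    if_pos (Finset.mem_univ j₀)]

lemma even_iff_c2 (a : Fin T → Fin 2) :
    Even (∑ j, (a j : ℕ)) ↔ ∑ j, c2 (a j) = 0 := by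
  rw [even_iff_two_dvd, ← ZMod.natCast_eq_zero_iff _ 2, Nat.cast_sum]
  rfl

lemma c2_sum_add (a d : Fin T → Fin 2) :
    (∑ j, c2 ((a + d) j)) = (∑ j, c2 (a j)) + ∑ j, c2 (d j) := by
  rw [← Finset.sum_add_distrib]
  exact Finset.sum_congr rfl fun j _ => c2_add (a j) (d j)

lemma card_even (hT : 1 ≤ T) :
    (univ.filter fun a : Fin T → Fin 2 => Even (∑ j, (a j : ℕ))).card
      = 2 ^ (T - 1) := by
  set j₀ : Fin T := ⟨0, hT⟩
  have hbij :
      (univ.filter fun a : Fin T → Fin 2 => Even (∑ j, (a j : ℕ))).card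
        = (univ.filter fun a : Fin T → Fin 2 => ¬ Even (∑ j, (a j : ℕ))).card := by
    have key : ∀ a : Fin T → Fin 2, Even (∑ j, (a j : ℕ)) ↔
        ¬ Even (∑ j, ((a + singleT j₀) j : ℕ)) := by
      intro a
      rw [even_iff_c2, even_iff_c2, c2_sum_add, sum_c2_singleT]
      rcases zmod2_cases (∑ j, c2 (a j)) with h | h <;> rw [h] <;> simp <;> decide
    refine Finset.card_bij' (fun a _ => a + singleT j₀) (fun a _ => a + singleT j₀)
      ?_ ?_ ?_ ?_
    · intro a ha
      rw [Finset.mem_filter] at ha ⊢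
      exact ⟨Finset.mem_univ _, (key a).mp ha.2⟩
    · intro a ha
      rw [Finset.mem_filter] at ha ⊢
      refine ⟨Finset.mem_univ _, ?_⟩
      by_contra hc
      exact ha.2 ((key a).mpr hc)
    · intro a _
      show a + singleT j₀ + singleT j₀ = a
      exact funext fun j => fin2_add_add _ _
    · intro a _
      show a + singleT j₀ + singleT j₀ = a
      exact funext fun j => fin2_add_add _ _
  have hsplit := Finset.card_filter_add_card_filter_not
    (s := (univ : Finset (Fin T → Fin 2))) (fun a => Even (∑ j, (a j : ℕ)))
  simp only [Finset.card_univ, Fintype.card_fun, Fintype.card_fin] at hsplit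
  rw [← hbij, two_pow_pred _ hT] at hsplit
  have h2 : 2 * (univ.filter fun a : Fin T → Fin 2 => Even (∑ j, (a j : ℕ))).card
      = 2 * 2 ^ (T - 1) := by rw [two_mul]; exact hsplit
  exact Nat.eq_of_mul_eq_mul_left two_pos h2

end CatGame
namespace CatGame
set_option linter.unusedSectionVars false

variable {T : ℕ}

lemma evenCharSum (hT : 1 ≤ T) (s : Fin T → ZMod 2) :
    ∑ a ∈ univ.filter (fun a : Fin T → Fin 2 => Even (∑ j, (a j : ℕ))),
        sgn (∑ j, c2 (a j) * s j)
      = if (∀ j, s j = 0) ∨ (∀ j, s j = 1) then ((2 : ℂ) ^ (T - 1)) else 0 := by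
  by_cases hcond : (∀ j, s j = 0) ∨ (∀ j, s j = 1)
  · rw [if_pos hcond]
    have h1 : ∀ a ∈ univ.filter (fun a : Fin T → Fin 2 => Even (∑ j, (a j : ℕ))),
        sgn (∑ j, c2 (a j) * s j) = 1 := by
      intro a ha
      rw [Finset.mem_filter] at ha
      rcases hcond with h | h
      · have : (∑ j, c2 (a j) * s j) = 0 := by
          apply Finset.sum_eq_zero
          intro j _
          rw [h j, mul_zero]
        rw [this, sgn_zero]
      · have : (∑ j, c2 (a j) * s j) = 0 := by
          have he : ∀ j, c2 (a j) * s j = c2 (a j) := by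
            intro j; rw [h j, mul_one]
          rw [Finset.sum_congr rfl (fun j _ => he j)]
          exact (even_iff_c2 a).mp ha.2
        rw [this, sgn_zero]
    rw [Finset.sum_congr rfl h1, Finset.sum_const, card_even hT]
    simp
  · rw [if_neg hcond]
    push_neg at hcond
    obtain ⟨hns0, hns1⟩ := hcond
    obtain ⟨j₁, hj₁⟩ := hns0
    obtain ⟨j₂, hj₂⟩ := hns1
    have hs₁ : s j₁ = 1 := by
      rcases zmod2_cases (s j₁) with h | h
      · exact absurd h hj₁
      · exact h
    have hs₂ : s j₂ = 0 := by
      rcases zmod2_cases (s j₂) with h | h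
      · exact h
      · exact absurd h hj₂
    set d : Fin T → Fin 2 := singleT j₁ + singleT j₂ with hd
    have hQd : (∑ j, c2 (d j)) = 0 := by
      rw [hd]
      have : ∀ j, c2 ((singleT j₁ + singleT j₂) j)
          = c2 (singleT j₁ j) + c2 (singleT j₂ j) := fun j => c2_add _ _
      rw [Finset.sum_congr rfl (fun j _ => this j), Finset.sum_add_distrib,
        sum_c2_singleT, sum_c2_singleT]
      rfl
    have hBd : (∑ j, c2 (d j) * s j) = 1 := by
      rw [hd]
      have : ∀ j, c2 ((singleT j₁ + singleT j₂) j) * s j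
          = c2 (singleT j₁ j) * s j + c2 (singleT j₂ j) * s j := by
        intro j
        rw [Pi.add_apply, c2_add, add_mul]
      rw [Finset.sum_congr rfl (fun j _ => this j), Finset.sum_add_distrib,
        sum_c2_singleT_mul, sum_c2_singleT_mul, hs₁, hs₂, add_zero]
    refine Finset.sum_involution (fun a _ => a + d) ?_ ?_ ?_ ?_
    · intro a _
      have : (∑ j, c2 ((a + d) j) * s j) = (∑ j, c2 (a j) * s j) + 1 := by
        rw [← hBd, ← Finset.sum_add_distrib]
        apply Finset.sum_congr rfl
        intro j _
        rw [Pi.add_apply, c2_add, add_mul]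
      rw [this, sgn_add, sgn_one]
      ring
    · intro a _ _ hcon
      have hjne : j₁ ≠ j₂ := by
        intro h
        rw [h, hs₂] at hs₁
        exact absurd hs₁ (by decide)
      have hdj : d j₁ = 1 := by
        rw [hd]
        simp only [Pi.add_apply, singleT, if_pos rfl, if_neg hjne, add_zero]
        rfl
      have h2 : a j₁ + d j₁ = a j₁ := congrFun hcon j₁
      rw [hdj] at h2
      have : ∀ x : Fin 2, x + 1 ≠ x := by decide
      exact this (a j₁) h2
    · intro a ha
      rw [Finset.mem_filter] at ha ⊢
      refine ⟨Finset.mem_univ _, ?_⟩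
      rw [even_iff_c2] at ha ⊢
      rw [c2_sum_add, ha.2, hQd, add_zero]
    · intro a _
      show a + d + d = a
      exact funext fun j => fin2_add_add _ _

end CatGame
namespace CatGame
set_option linter.unusedSectionVars false

variable {ι : Type*} [Fintype ι] [DecidableEq ι] {T : ℕ}

lemma conj_sgn (x : ZMod 2) : (starRingEnd ℂ) (sgn x) = sgn x := by
  rcases zmod2_cases x with h | h <;> subst h <;> simp [sgn_zero, sgn_one]

lemma sum_indic (Γ : Finset ι) (Γt : Finset ι) (hc : (Γ ∩ Γt).card = 1) :
    ∑ b ∈ Γ, indicZ2 Γt b = 1 := by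
  unfold indicZ2
  rw [Finset.sum_ite_mem, Finset.sum_const, hc, one_smul]

lemma flip_sum (Γ : Finset ι) (Γt : Finset ι) (hc : (Γ ∩ Γt).card = 1)
    (σ : ι → ZMod 2) :
    (∑ b ∈ Γ, (σ + indicZ2 Γt) b) = (∑ b ∈ Γ, σ b) + 1 := by
  simp only [Pi.add_apply, Finset.sum_add_distrib, sum_indic Γ Γt hc]

lemma cast_M (a : Fin T → Fin 2) (t : Fin T → ZMod 2) :
    (((∑ j, (a j : ℕ) * (t j).val) : ℕ) : ZMod 2) = ∑ j, c2 (a j) * t j := by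
  rw [Nat.cast_sum]
  apply Finset.sum_congr rfl
  intro j _
  rw [Nat.cast_mul, val_natCast_zmod2]
  rfl

lemma phase_key (Γ : Fin T → Finset ι) (Γt : Finset ι)
    (hcap : ∀ j, (Γ j ∩ Γt).card = 1) (a : Fin T → Fin 2)
    (ha : Even (∑ j, (a j : ℕ))) (σ : ι → ZMod 2) :
    sgn (rOf (fun j => (a j : ℕ)))
        * ((starRingEnd ℂ) (Complex.I ^ (∑ j, (a j : ℕ) * (∑ b ∈ Γ j, σ b).val))
          * Complex.I ^ (∑ j, (a j : ℕ) * (∑ b ∈ Γ j, (σ + indicZ2 Γt) b).val))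
      = sgn (∑ j, c2 (a j) * ∑ b ∈ Γ j, σ b) := by
  set k := ∑ j, (a j : ℕ) with hk
  set M := ∑ j, (a j : ℕ) * (∑ b ∈ Γ j, σ b).val with hM
  set M' := ∑ j, (a j : ℕ) * (∑ b ∈ Γ j, (σ + indicZ2 Γt) b).val with hM'
  have hMM' : M + M' = k := by
    rw [hM, hM', hk, ← Finset.sum_add_distrib]
    apply Finset.sum_congr rfl
    intro j _
    rw [flip_sum (Γ j) Γt (hcap j) σ, ← mul_add]
    have hv : ∀ x : ZMod 2, x.val + (x + 1).val = 1 := by decide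
    rw [hv, mul_one]
  have hr : sgn (rOf (fun j => (a j : ℕ))) = (-1 : ℂ) ^ (k / 2) := by
    rw [neg_one_pow_nat]; rfl
  have hIk : Complex.I ^ k = (-1 : ℂ) ^ (k / 2) := by
    conv_lhs => rw [← Nat.div_mul_cancel (even_iff_two_dvd.mp ha), mul_comm, pow_mul,
      Complex.I_sq]
  have hconj : (starRingEnd ℂ) (Complex.I ^ M) = (-1 : ℂ) ^ M * Complex.I ^ M := by
    rw [map_pow, Complex.conj_I, neg_pow]
  rw [hconj, hr]
  rw [mul_assoc ((-1 : ℂ) ^ M), ← pow_add, hMM', hIk]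
  have : (-1 : ℂ) ^ (k / 2) * ((-1 : ℂ) ^ M * (-1 : ℂ) ^ (k / 2))
      = (-1 : ℂ) ^ M * ((-1 : ℂ) ^ (k / 2) * (-1 : ℂ) ^ (k / 2)) := by ring
  rw [this, ← hr, sgn_mul_self, mul_one, neg_one_pow_nat, cast_M]

end CatGame
namespace CatGame
set_option linter.unusedSectionVars false

variable {ι : Type*} [Fintype ι] [DecidableEq ι] {T : ℕ}

lemma winProb_eq (Γ : Fin T → Finset ι) (Γt : Finset ι) (hne : Γt.Nonempty)
    (hcap : ∀ j, (Γ j ∩ Γt).card = 1)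
    (ψ : QubitSpace ι) (hψ : qInner ψ ψ = 1)
    (a : Fin T → Fin 2) (ha : Even (∑ j, (a j : ℕ))) :
    winProb Γ Γt (fun j => (a j : ℕ)) ψ
      = 1 / 2 + (1 / 2) * (∑ σ, sgn (∑ j, c2 (a j) * ∑ b ∈ Γ j, σ b) *
          ((starRingEnd ℂ) (ψ σ) * ψ (σ + indicZ2 Γt))).re := by
  obtain ⟨b₀, hb₀⟩ := hne
  have hn : 1 ≤ Fintype.card ι := Fintype.card_pos_iff.mpr ⟨b₀⟩
  unfold winProb
  set n := Fintype.card ι with hn_def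
  set e := indicZ2 Γt with he_def
  set r : ZMod 2 := rOf (fun j => (a j : ℕ)) with hr_def
  set Ψ : QubitSpace ι := postState Γ (fun j => (a j : ℕ)) ψ with hΨ_def
  set M : (ι → ZMod 2) → ℕ :=
    fun σ => ∑ j, (a j : ℕ) * (∑ b ∈ Γ j, σ b).val with hM_def
  have hΨap : ∀ σ, Ψ σ = Complex.I ^ M σ * ψ σ := fun σ => postState_apply Γ a ψ σ
  have he0 : e b₀ = 1 := by rw [he_def]; unfold indicZ2; rw [if_pos hb₀]
  have hσe : ∀ σ : ι → ZMod 2, σ ≠ σ + e := by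
    intro σ hcontra
    have h1 := congrFun hcontra b₀
    rw [Pi.add_apply, he0] at h1
    have h2 : ∀ x : ZMod 2, x ≠ x + 1 := by decide
    exact h2 (σ b₀) h1
  have hE : ∀ (σ y : ι → ZMod 2), ((-1 : ℂ)) ^ (∑ b, (σ b).val * (y b).val)
      = sgn (∑ b, σ b * y b) := by
    intro σ y
    rw [neg_one_pow_nat]
    congr 1
    rw [Nat.cast_sum]
    apply Finset.sum_congr rfl
    intro b _
    rw [← val_mul_zmod2, val_natCast_zmod2]
  set c : ℝ := (Real.sqrt 2 ^ n)⁻¹ with hc_def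
  have hzy : ∀ y : ι → ZMod 2, qInner (chi y) Ψ
      = ↑c * ∑ σ, sgn (∑ b, σ b * y b) * Ψ σ := by
    intro y
    unfold qInner chi
    rw [Finset.mul_sum]
    apply Finset.sum_congr rfl
    intro σ _
    rw [map_mul, Complex.conj_ofReal, map_pow, map_neg, map_one, hE]
    ring
  have hzyc : ∀ y, (starRingEnd ℂ) (qInner (chi y) Ψ)
      = ↑c * ∑ σ, sgn (∑ b, σ b * y b) * (starRingEnd ℂ) (Ψ σ) := by
    intro y
    rw [hzy, map_mul, Complex.conj_ofReal, map_sum]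
    congr 1
    apply Finset.sum_congr rfl
    intro σ _
    rw [map_mul, conj_sgn]
  have hB : ∀ σ τ y : ι → ZMod 2, sgn (∑ b, σ b * y b) * sgn (∑ b, τ b * y b)
      = sgn (∑ b, (σ + τ) b * y b) := by
    intro σ τ y
    rw [← sgn_add]
    congr 1
    rw [← Finset.sum_add_distrib]
    apply Finset.sum_congr rfl
    intro b _
    rw [Pi.add_apply, add_mul]
  set N : ℂ := (2 : ℂ) ^ (n - 1) with hN_def
  set F := univ.filter (fun y : ι → ZMod 2 => ∑ b ∈ Γt, y b = r) with hF_def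
  have key : ∑ y ∈ F, (starRingEnd ℂ) (qInner (chi y) Ψ) * qInner (chi y) Ψ
      = ↑c * ↑c * (N * (∑ σ, (starRingEnd ℂ) (Ψ σ) * Ψ σ)
          + sgn r * N * (∑ σ, (starRingEnd ℂ) (Ψ σ) * Ψ (σ + e))) := by
    have step1 : ∀ y, (starRingEnd ℂ) (qInner (chi y) Ψ) * qInner (chi y) Ψ
        = ↑c * ↑c * ∑ σ, ∑ τ,
            sgn (∑ b, (σ + τ) b * y b) * ((starRingEnd ℂ) (Ψ σ) * Ψ τ) := by
      intro y
      rw [hzyc, hzy, mul_mul_mul_comm]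
      congr 1
      rw [Finset.sum_mul_sum]
      apply Finset.sum_congr rfl
      intro σ _
      apply Finset.sum_congr rfl
      intro τ _
      rw [← hB σ τ y]
      ring
    rw [Finset.sum_congr rfl (fun y _ => step1 y), ← Finset.mul_sum]
    congr 1
    rw [Finset.sum_comm]
    have inner2 : ∀ σ, ∑ y ∈ F, ∑ τ,
          sgn (∑ b, (σ + τ) b * y b) * ((starRingEnd ℂ) (Ψ σ) * Ψ τ)
        = N * ((starRingEnd ℂ) (Ψ σ) * Ψ σ)
          + sgn r * N * ((starRingEnd ℂ) (Ψ σ) * Ψ (σ + e)) := by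
      intro σ
      rw [Finset.sum_comm]
      have inner1 : ∀ τ, ∑ y ∈ F,
            sgn (∑ b, (σ + τ) b * y b) * ((starRingEnd ℂ) (Ψ σ) * Ψ τ)
          = (if τ = σ then N else if τ = σ + e then sgn r * N else 0)
              * ((starRingEnd ℂ) (Ψ σ) * Ψ τ) := by
        intro τ
        rw [← Finset.sum_mul, hF_def, charSum Γt ⟨b₀, hb₀⟩ r (σ + τ)]
        congr 1
        by_cases h1 : τ = σ
        · subst h1
          rw [if_pos (fun_add_self τ), if_pos rfl]
        · have hne0 : ¬ (σ + τ = 0) := by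
            intro h
            apply h1
            have := congrArg (fun w => σ + w) h
            simp only [add_zero] at this
            rw [← add_assoc, fun_add_self, zero_add] at this
            exact this
          rw [if_neg hne0, if_neg h1]
          by_cases h2 : τ = σ + e
          · have : σ + τ = e := by
              rw [h2, ← add_assoc, fun_add_self, zero_add]
            rw [if_pos this, if_pos h2]
          · have : ¬ (σ + τ = e) := by
              intro h
              apply h2
              have := congrArg (fun w => σ + w) h
              rw [← add_assoc, fun_add_self, zero_add] at this
              exact this
            rw [if_neg this, if_neg h2]
      rw [Finset.sum_congr rfl (fun τ _ => inner1 τ)]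
      have split : ∀ τ, (if τ = σ then N else if τ = σ + e then sgn r * N else 0)
            * ((starRingEnd ℂ) (Ψ σ) * Ψ τ)
          = (if τ = σ then N * ((starRingEnd ℂ) (Ψ σ) * Ψ τ) else 0)
            + (if τ = σ + e then sgn r * N * ((starRingEnd ℂ) (Ψ σ) * Ψ τ) else 0) := by
        intro τ
        by_cases h1 : τ = σ
        · rw [if_pos h1, if_pos h1, if_neg (by rw [h1]; exact hσe σ), add_zero]
        · rw [if_neg h1, if_neg h1]
          by_cases h2 : τ = σ + e
          · rw [if_pos h2, if_pos h2, zero_add]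
          · rw [if_neg h2, if_neg h2, zero_mul, add_zero]
      rw [Finset.sum_congr rfl (fun τ _ => split τ), Finset.sum_add_distrib,
        Finset.sum_ite_eq' univ σ (fun τ => N * ((starRingEnd ℂ) (Ψ σ) * Ψ τ)),
        Finset.sum_ite_eq' univ (σ + e)
          (fun τ => sgn r * N * ((starRingEnd ℂ) (Ψ σ) * Ψ τ)),
        if_pos (Finset.mem_univ σ), if_pos (Finset.mem_univ (σ + e))]
    rw [Finset.sum_congr rfl (fun σ _ => inner2 σ), Finset.sum_add_distrib,
      ← Finset.mul_sum, ← Finset.mul_sum]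
  have hS1 : (∑ σ, (starRingEnd ℂ) (Ψ σ) * Ψ σ) = 1 := by
    rw [← hψ]
    unfold qInner
    apply Finset.sum_congr rfl
    intro σ _
    rw [hΨap, map_mul]
    have hii : (starRingEnd ℂ) (Complex.I ^ M σ) * Complex.I ^ M σ = 1 := by
      rw [map_pow, Complex.conj_I, ← mul_pow, neg_mul, Complex.I_mul_I, neg_neg,
        one_pow]
    calc (starRingEnd ℂ) (Complex.I ^ M σ) * (starRingEnd ℂ) (ψ σ)
          * (Complex.I ^ M σ * ψ σ)
        = ((starRingEnd ℂ) (Complex.I ^ M σ) * Complex.I ^ M σ)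
            * ((starRingEnd ℂ) (ψ σ) * ψ σ) := by ring
      _ = (starRingEnd ℂ) (ψ σ) * ψ σ := by rw [hii, one_mul]
  have hS2 : sgn r * (∑ σ, (starRingEnd ℂ) (Ψ σ) * Ψ (σ + e))
      = ∑ σ, sgn (∑ j, c2 (a j) * ∑ b ∈ Γ j, σ b)
          * ((starRingEnd ℂ) (ψ σ) * ψ (σ + e)) := by
    rw [Finset.mul_sum]
    apply Finset.sum_congr rfl
    intro σ _
    rw [hΨap, hΨap, map_mul]
    have hpk := phase_key Γ Γt hcap a ha σ
    calc sgn r * ((starRingEnd ℂ) (Complex.I ^ M σ) * (starRingEnd ℂ) (ψ σ)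
          * (Complex.I ^ M (σ + e) * ψ (σ + e)))
        = (sgn r * ((starRingEnd ℂ) (Complex.I ^ M σ) * Complex.I ^ M (σ + e)))
            * ((starRingEnd ℂ) (ψ σ) * ψ (σ + e)) := by ring
      _ = sgn (∑ j, c2 (a j) * ∑ b ∈ Γ j, σ b)
            * ((starRingEnd ℂ) (ψ σ) * ψ (σ + e)) := by rw [hr_def, hpk]
  have hcc : (↑c * ↑c : ℂ) * N = 1 / 2 := by
    have h1 : (c * c : ℝ) = ((2 : ℝ) ^ n)⁻¹ := by
      rw [hc_def, ← mul_inv, ← mul_pow, Real.mul_self_sqrt (by norm_num : (0:ℝ) ≤ 2)]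
    have h2 : (↑c * ↑c : ℂ) = (((2 : ℝ) ^ n)⁻¹ : ℝ) := by
      rw [← Complex.ofReal_mul, h1]
    rw [h2, hN_def]
    obtain ⟨m, hm⟩ := Nat.exists_eq_add_of_le hn
    rw [hm]
    have hm1 : (1 + m) - 1 = m := by omega
    rw [hm1]
    push_cast
    rw [pow_add, pow_one]
    have : ((2 : ℂ) ^ m) ≠ 0 := pow_ne_zero _ (by norm_num)
    field_simp
  have habs : ∀ y, ‖qInner (chi y) Ψ‖ ^ 2
      = ((starRingEnd ℂ) (qInner (chi y) Ψ) * qInner (chi y) Ψ).re := by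
    intro y
    rw [Complex.sq_norm, ← Complex.normSq_eq_conj_mul_self, Complex.ofReal_re]
  have final : ∑ y ∈ F, (starRingEnd ℂ) (qInner (chi y) Ψ) * qInner (chi y) Ψ
      = 1 / 2 + 1 / 2 * (∑ σ, sgn (∑ j, c2 (a j) * ∑ b ∈ Γ j, σ b)
          * ((starRingEnd ℂ) (ψ σ) * ψ (σ + e))) := by
    rw [key, hS1, mul_one]
    calc ↑c * ↑c * (N + sgn r * N * (∑ σ, (starRingEnd ℂ) (Ψ σ) * Ψ (σ + e)))
        = (↑c * ↑c * N)
          + (↑c * ↑c * N) * (sgn r * (∑ σ, (starRingEnd ℂ) (Ψ σ) * Ψ (σ + e))) := by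
          ring
      _ = 1 / 2 + 1 / 2 * (∑ σ, sgn (∑ j, c2 (a j) * ∑ b ∈ Γ j, σ b)
            * ((starRingEnd ℂ) (ψ σ) * ψ (σ + e))) := by rw [hcc, hS2]
  rw [Finset.sum_congr rfl (fun y _ => habs y), ← Complex.re_sum, final]
  simp [Complex.add_re, Complex.mul_re]

end CatGame
namespace CatGame
set_option linter.unusedSectionVars false

variable {ι : Type*} [Fintype ι] [DecidableEq ι]

lemma qInner_delta (ψ : QubitSpace ι) (σ : ι → ZMod 2) :
    qInner ψ (deltaVec σ) = (starRingEnd ℂ) (ψ σ) := by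
  unfold qInner deltaVec
  have h : ∀ τ : ι → ZMod 2, (starRingEnd ℂ) (ψ τ) * (if τ = σ then 1 else 0)
      = if τ = σ then (starRingEnd ℂ) (ψ τ) else 0 := by
    intro τ; split <;> simp
  rw [Finset.sum_congr rfl (fun τ _ => h τ),
    Finset.sum_ite_eq' univ σ (fun τ => (starRingEnd ℂ) (ψ τ)),
    if_pos (Finset.mem_univ σ)]

lemma qInner_Vdelta (Γt : Finset ι) (ψ : QubitSpace ι) (σ : ι → ZMod 2) :
    qInner ψ (Vop Γt (deltaVec σ)) = (starRingEnd ℂ) (ψ (σ + indicZ2 Γt)) := by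
  unfold qInner
  have hVa : ∀ τ : ι → ZMod 2, Vop Γt (deltaVec σ) τ
      = if τ = σ + indicZ2 Γt then 1 else 0 := by
    intro τ
    show deltaVec σ (τ + indicZ2 Γt) = _
    unfold deltaVec
    congr 1
    simp only [eq_iff_iff]
    constructor
    · intro h
      rw [← h, add_assoc, fun_add_self, add_zero]
    · intro h
      rw [h, add_assoc, fun_add_self, add_zero]
  have h : ∀ τ : ι → ZMod 2, (starRingEnd ℂ) (ψ τ) * Vop Γt (deltaVec σ) τ
      = if τ = σ + indicZ2 Γt then (starRingEnd ℂ) (ψ τ) else 0 := by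
    intro τ; rw [hVa]; split <;> simp
  rw [Finset.sum_congr rfl (fun τ _ => h τ),
    Finset.sum_ite_eq' univ (σ + indicZ2 Γt) (fun τ => (starRingEnd ℂ) (ψ τ)),
    if_pos (Finset.mem_univ _)]

lemma qInner_smul_add (ψ u v : QubitSpace ι) (cc : ℂ) :
    qInner ψ (cc • (u + v)) = cc * (qInner ψ u + qInner ψ v) := by
  unfold qInner
  rw [mul_add, Finset.mul_sum, Finset.mul_sum, ← Finset.sum_add_distrib]
  apply Finset.sum_congr rfl
  intro τ _
  show (starRingEnd ℂ) (ψ τ) * (cc * (u τ + v τ)) = _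
  ring

lemma qInner_smul_sub (ψ u v : QubitSpace ι) (cc : ℂ) :
    qInner ψ (cc • (u - v)) = cc * (qInner ψ u - qInner ψ v) := by
  unfold qInner
  rw [mul_sub, Finset.mul_sum, Finset.mul_sum, ← Finset.sum_sub_distrib]
  apply Finset.sum_congr rfl
  intro τ _
  show (starRingEnd ℂ) (ψ τ) * (cc * (u τ - v τ)) = _
  ring

lemma catFid (Γt : Finset ι) (ψ : QubitSpace ι) (σ : ι → ZMod 2) :
    ‖qInner ψ ((((Real.sqrt 2 : ℝ) : ℂ))⁻¹ •
        (deltaVec σ + Vop Γt (deltaVec σ)))‖ ^ 2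
      - ‖qInner ψ ((((Real.sqrt 2 : ℝ) : ℂ))⁻¹ •
        (deltaVec σ - Vop Γt (deltaVec σ)))‖ ^ 2
    = ((starRingEnd ℂ) (ψ σ) * ψ (σ + indicZ2 Γt)
        + (starRingEnd ℂ) (ψ (σ + indicZ2 Γt)) * ψ σ).re := by
  set u := (starRingEnd ℂ) (ψ σ) with hu
  set v := (starRingEnd ℂ) (ψ (σ + indicZ2 Γt)) with hv
  have hplus : qInner ψ ((((Real.sqrt 2 : ℝ) : ℂ))⁻¹ •
      (deltaVec σ + Vop Γt (deltaVec σ))) = (((Real.sqrt 2 : ℝ) : ℂ))⁻¹ * (u + v) := by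
    rw [qInner_smul_add, qInner_delta, qInner_Vdelta]
  have hminus : qInner ψ ((((Real.sqrt 2 : ℝ) : ℂ))⁻¹ •
      (deltaVec σ - Vop Γt (deltaVec σ))) = (((Real.sqrt 2 : ℝ) : ℂ))⁻¹ * (u - v) := by
    rw [qInner_smul_sub, qInner_delta, qInner_Vdelta]
  have habs2 : ‖(((Real.sqrt 2 : ℝ) : ℂ))⁻¹‖ ^ 2 = 1 / 2 := by
    rw [norm_inv, Complex.norm_real, Real.norm_of_nonneg (Real.sqrt_nonneg 2), inv_pow,
      Real.sq_sqrt (by norm_num : (0:ℝ) ≤ 2)]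
    norm_num
  rw [hplus, hminus, norm_mul, norm_mul, mul_pow, mul_pow, habs2,
    Complex.sq_norm, Complex.sq_norm, Complex.normSq_add, Complex.normSq_sub]
  have hval : u * (starRingEnd ℂ) v = (starRingEnd ℂ) (ψ σ) * ψ (σ + indicZ2 Γt) := by
    rw [hu, hv, Complex.conj_conj]
  have hconj : (starRingEnd ℂ) (ψ (σ + indicZ2 Γt)) * ψ σ
      = (starRingEnd ℂ) ((starRingEnd ℂ) (ψ σ) * ψ (σ + indicZ2 Γt)) := by
    rw [map_mul, Complex.conj_conj]
    ring
  rw [hconj, Complex.add_re, Complex.conj_re, ← hval]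
  ring

end CatGame

open CatGame

/-- Lemma 1 of the paper: for any unit vector `ψ`, the quantum
winning probability of the strategy `𝒫_TC` on the instance
`(T, Γ₁, …, Γ_T, Γ̃)` satisfies
`p_qu(ψ) − 1/2 = (1/2) ∑_σ (|⟨ψ, φ⁺_σ⟩|² − |⟨ψ, φ⁻_σ⟩|²)`,
the sum running over configurations `σ` with `∑_{b∈Γ_j} σ b = 0` for all `j`,
where `φ^±_σ = (1/√2)(δ_σ ± V_{Γ̃} δ_σ)`. -/
theorem quantumWinProb_eq_cat_fidelities {ι : Type*} [Fintype ι] [DecidableEq ι]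
    (T : ℕ) (hT : 3 ≤ T) (Γ : Fin T → Finset ι)
    (hdisj : ∀ j k, j ≠ k → Disjoint (Γ j) (Γ k))
    (Γt : Finset ι) (hcap : ∀ j, (Γ j ∩ Γt).card = 1)
    (ψ : QubitSpace ι) (hψ : qInner ψ ψ = 1) :
    quantumWinProb Γ Γt ψ - 1 / 2
      = (1 / 2) *
          ∑ σ ∈ univ.filter (fun σ : ι → ZMod 2 => ∀ j, ∑ b ∈ Γ j, σ b = 0),
            (‖qInner ψ
                ((((Real.sqrt 2 : ℝ) : ℂ))⁻¹ •
                  (deltaVec σ + Vop Γt (deltaVec σ)))‖ ^ 2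
              - ‖qInner ψ
                ((((Real.sqrt 2 : ℝ) : ℂ))⁻¹ •
                  (deltaVec σ - Vop Γt (deltaVec σ)))‖ ^ 2) := by
  classical
  have hT1 : 1 ≤ T := by omega
  have hne : Γt.Nonempty := by
    have h := hcap ⟨0, hT1⟩
    have h2 : (Γ ⟨0, hT1⟩ ∩ Γt).Nonempty := Finset.card_pos.mp (by rw [h]; norm_num)
    obtain ⟨b, hb⟩ := h2
    exact ⟨b, (Finset.mem_inter.mp hb).2⟩
  unfold quantumWinProb
  rw [Finset.sum_congr rfl (fun a ha =>
    winProb_eq Γ Γt hne hcap ψ hψ a (Finset.mem_filter.mp ha).2)]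
  rw [Finset.sum_add_distrib, Finset.sum_const, card_even hT1, ← Finset.mul_sum,
    ← Complex.re_sum, Finset.sum_comm]
  have hinner : ∀ σ : ι → ZMod 2,
      (∑ a ∈ univ.filter (fun a : Fin T → Fin 2 => Even (∑ j, (a j : ℕ))),
        sgn (∑ j, c2 (a j) * ∑ b ∈ Γ j, σ b)
          * ((starRingEnd ℂ) (ψ σ) * ψ (σ + indicZ2 Γt)))
      = (if (∀ j, (∑ b ∈ Γ j, σ b) = 0) ∨ (∀ j, (∑ b ∈ Γ j, σ b) = (1 : ZMod 2))
          then (2 : ℂ) ^ (T - 1) * ((starRingEnd ℂ) (ψ σ) * ψ (σ + indicZ2 Γt))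
          else 0) := by
    intro σ
    rw [← Finset.sum_mul, evenCharSum hT1 (fun j => ∑ b ∈ Γ j, σ b), ite_mul,
      zero_mul]
  rw [Finset.sum_congr rfl (fun σ _ => hinner σ), ← Finset.sum_filter]
  have hdisj2 : Disjoint
      (univ.filter (fun σ : ι → ZMod 2 => ∀ j, (∑ b ∈ Γ j, σ b) = 0))
      (univ.filter (fun σ : ι → ZMod 2 => ∀ j, (∑ b ∈ Γ j, σ b) = 1)) := by
    rw [Finset.disjoint_left]
    intro σ h0 h1
    rw [Finset.mem_filter] at h0 h1
    have hz : (0 : ZMod 2) = 1 := by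
      rw [← h0.2 ⟨0, hT1⟩, h1.2 ⟨0, hT1⟩]
    exact absurd hz (by decide)
  rw [Finset.filter_or, Finset.sum_union hdisj2]
  have hbij : (∑ σ ∈ univ.filter (fun σ : ι → ZMod 2 => ∀ j, (∑ b ∈ Γ j, σ b) = 1),
        (starRingEnd ℂ) (ψ σ) * ψ (σ + indicZ2 Γt))
      = ∑ σ ∈ univ.filter (fun σ : ι → ZMod 2 => ∀ j, (∑ b ∈ Γ j, σ b) = 0),
        (starRingEnd ℂ) (ψ (σ + indicZ2 Γt)) * ψ σ := by
    refine Finset.sum_nbij' (fun σ => σ + indicZ2 Γt) (fun σ => σ + indicZ2 Γt)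
      ?_ ?_ ?_ ?_ ?_
    · intro σ hσ
      rw [Finset.mem_filter] at hσ ⊢
      refine ⟨Finset.mem_univ _, fun j => ?_⟩
      rw [flip_sum (Γ j) Γt (hcap j), hσ.2 j]
      rfl
    · intro σ hσ
      rw [Finset.mem_filter] at hσ ⊢
      refine ⟨Finset.mem_univ _, fun j => ?_⟩
      rw [flip_sum (Γ j) Γt (hcap j), hσ.2 j, zero_add]
    · intro σ _
      show σ + indicZ2 Γt + indicZ2 Γt = σ
      rw [add_assoc, fun_add_self, add_zero]
    · intro σ _
      show σ + indicZ2 Γt + indicZ2 Γt = σ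
      rw [add_assoc, fun_add_self, add_zero]
    · intro σ _
      show (starRingEnd ℂ) (ψ σ) * ψ (σ + indicZ2 Γt)
          = (starRingEnd ℂ) (ψ (σ + indicZ2 Γt + indicZ2 Γt)) * ψ (σ + indicZ2 Γt)
      rw [add_assoc, fun_add_self, add_zero]
  rw [← Finset.mul_sum, ← Finset.mul_sum, hbij, ← mul_add, ← Finset.sum_add_distrib]
  have hre : ∀ z : ℂ, ((2 : ℂ) ^ (T - 1) * z).re = 2 ^ (T - 1) * z.re := by
    intro z
    rw [show ((2 : ℂ) ^ (T - 1)) = (((2 : ℝ) ^ (T - 1) : ℝ) : ℂ) by push_cast; ring,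
      Complex.re_ofReal_mul]
  rw [hre, Complex.re_sum]
  rw [Finset.sum_congr rfl (fun σ _ => catFid Γt ψ σ)]
  have h2ne : ((2 : ℝ) ^ (T - 1)) ≠ 0 := pow_ne_zero _ (by norm_num)
  rw [nsmul_eq_mul]
  push_cast
  field_simp
  ring
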